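/- Let ν_k/N_k = (Σ_{l=0}^{k}β̄_l − Σ_{l=1}^{k-1}n_lβ̄_l)/(n_kβ̄_k) + (k−1) + Σ_{l=k+1}^{g}1/n_l and suppose e^{−2πi ν_k/N_k} is a root of t^{M_k} − 1, where N_k = lcm(β̄_k/e_k, n_k,…,n_g), M_k = lcm(β̄_k/e_k, n_{k+1},…,n_g). Then n_k divides M_k, hence N_k = M_k. -/

import Mathlib

/-- `e_i = gcd(β̄₀,…,β̄_i)`. -/
def charE (β : ℕ → ℕ) (i : ℕ) : ℕ := (Finset.range (i + 1)).gcd β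

/-- `n_j = e_{j-1}/e_j`. -/
def charN (β : ℕ → ℕ) (j : ℕ) : ℕ := charE β (j - 1) / charE β j

/-- `L_k = lcm(n_k,…,n_g)` (so `L_{g+1} = 1`). -/
def charL (β : ℕ → ℕ) (g k : ℕ) : ℕ := (Finset.Icc k g).lcm (charN β)

/-- `M_k = lcm(β̄_k/e_k, n_{k+1},…,n_g)`. -/
def charM (β : ℕ → ℕ) (g k : ℕ) : ℕ := Nat.lcm (β k / charE β k) (charL β g (k + 1))

/-- `N_k = lcm(β̄_k/e_k, n_k,…,n_g)`. -/
def charBigN (β : ℕ → ℕ) (g k : ℕ) : ℕ := Nat.lcm (β k / charE β k) (charL β g k)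

/-- The rational number
`ν_k/N_k = (Σ_{l=0}^{k}β̄_l − Σ_{l=1}^{k-1}n_lβ̄_l)/(n_kβ̄_k) + (k−1) + Σ_{l=k+1}^{g}1/n_l`. -/
def nuOverN (β : ℕ → ℕ) (g k : ℕ) : ℚ :=
  ((∑ l ∈ Finset.range (k + 1), (β l : ℚ)) -
      ∑ l ∈ Finset.Icc 1 (k - 1), (charN β l : ℚ) * (β l : ℚ)) /
    ((charN β k : ℚ) * (β k : ℚ)) + ((k : ℚ) - 1) +
  ∑ l ∈ Finset.Icc (k + 1) g, (1 : ℚ) / (charN β l : ℚ)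

section aux
variable {β : ℕ → ℕ}

lemma charE_dvd (β : ℕ → ℕ) {i j : ℕ} (h : i ≤ j) : charE β j ∣ β i :=
  Finset.gcd_dvd (Finset.mem_range.2 (Nat.lt_succ_of_le h))

lemma charE_dvd_charE (β : ℕ → ℕ) {i j : ℕ} (h : i ≤ j) : charE β j ∣ charE β i :=
  Finset.dvd_gcd fun l hl => charE_dvd β (le_trans (Nat.lt_succ_iff.1 (Finset.mem_range.1 hl)) h)

lemma charE_pos (hβ0 : 0 < β 0) (i : ℕ) : 0 < charE β i := by
  rcases Nat.eq_zero_or_pos (charE β i) with h | h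
  · exact absurd (Nat.eq_zero_of_zero_dvd (h ▸ charE_dvd β (i := 0) (Nat.zero_le i))) hβ0.ne'
  · exact h

lemma charN_mul_charE (β : ℕ → ℕ) (j : ℕ) : charN β j * charE β j = charE β (j - 1) :=
  Nat.div_mul_cancel (charE_dvd_charE β (Nat.sub_le j 1))

lemma charN_pos (hβ0 : 0 < β 0) (j : ℕ) : 0 < charN β j :=
  Nat.div_pos (Nat.le_of_dvd (charE_pos hβ0 _) (charE_dvd_charE β (Nat.sub_le j 1)))
    (charE_pos hβ0 j)

lemma charL_pos (hβ0 : 0 < β 0) (g k : ℕ) : 0 < charL β g k := by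
  rcases Nat.eq_zero_or_pos (charL β g k) with h | h
  · rw [charL, Finset.lcm_eq_zero_iff] at h
    obtain ⟨l, -, hl⟩ := h
    exact absurd hl (charN_pos hβ0 l).ne'
  · exact h

lemma charM_pos (hβ0 : 0 < β 0) {g k : ℕ} (hβk : 0 < β k) : 0 < charM β g k :=
  Nat.pos_of_ne_zero <| Nat.lcm_ne_zero
    (Nat.div_pos (Nat.le_of_dvd hβk (charE_dvd β le_rfl)) (charE_pos hβ0 k)).ne'
    (charL_pos hβ0 g (k + 1)).ne'

end aux

/-- If `e^{−2πi ν_k/N_k}` is a root of `t^{M_k} − 1`, then `n_k` divides `M_k`,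
hence `N_k = M_k`. -/

theorem nk_dvd_Mk_of_root (g k : ℕ) (β : ℕ → ℕ) (hpos : ∀ i ≤ g, 0 < β i)
    (hk1 : 1 ≤ k) (hkg : k ≤ g)
    (hroot : Complex.exp (-(2 * Real.pi) * Complex.I * ((nuOverN β g k : ℚ) : ℂ))
        ^ charM β g k = 1) :
    charN β k ∣ charM β g k ∧ charBigN β g k = charM β g k := by
  have hβ0 : 0 < β 0 := hpos 0 (Nat.zero_le g)
  have hβk : 0 < β k := hpos k hkg
  set M := charM β g k with hM
  have hMpos : 0 < M := charM_pos hβ0 hβk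
  -- Step 1: ν/N * M is an integer
  rw [← Complex.exp_nat_mul, Complex.exp_eq_one_iff] at hroot
  obtain ⟨n, hn⟩ := hroot
  have hπ : (Real.pi : ℂ) ≠ 0 := by exact_mod_cast Real.pi_ne_zero
  have hne : (2 * (Real.pi : ℂ)) * Complex.I ≠ 0 :=
    mul_ne_zero (mul_ne_zero two_ne_zero hπ) Complex.I_ne_zero
  have hxm : ((nuOverN β g k : ℚ) : ℂ) * (M : ℂ) = ((-n : ℤ) : ℂ) := by
    apply mul_right_cancel₀ (neg_ne_zero.2 hne)
    push_cast
    linear_combination hn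
  have hQ : nuOverN β g k * (M : ℚ) = ((-n : ℤ) : ℚ) := by exact_mod_cast hxm
  -- Step 2: the tail sum times M is a natural number
  set t : ℕ := ∑ l ∈ Finset.Icc (k + 1) g, M / charN β l with ht
  have hT : (∑ l ∈ Finset.Icc (k + 1) g, (1 : ℚ) / (charN β l : ℚ)) * (M : ℚ) = (t : ℚ) := by
    rw [Finset.sum_mul, ht, Nat.cast_sum]
    refine Finset.sum_congr rfl fun l hl => ?_
    have hdvd : charN β l ∣ M := dvd_trans (Finset.dvd_lcm hl) (Nat.dvd_lcm_right _ _)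
    rw [Nat.cast_div hdvd (by exact_mod_cast (charN_pos hβ0 l).ne')]
    ring
  -- Step 3: extract integer divisibility
  set SZ : ℤ := (∑ l ∈ Finset.range (k + 1), (β l : ℤ)) -
      ∑ l ∈ Finset.Icc 1 (k - 1), (charN β l : ℤ) * (β l : ℤ) with hSZ
  set d : ℤ := -n - ((k : ℤ) - 1) * M - t with hd
  have hab : ((charN β k : ℚ) * (β k : ℚ)) ≠ 0 :=
    mul_ne_zero (by exact_mod_cast (charN_pos hβ0 k).ne') (by exact_mod_cast hβk.ne')
  have hSM : (SZ : ℚ) * M = (d : ℚ) * ((charN β k : ℚ) * (β k : ℚ)) := by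
    rw [nuOverN] at hQ
    rw [add_mul, add_mul, hT] at hQ
    have h1 : ((∑ l ∈ Finset.range (k + 1), (β l : ℚ)) -
        ∑ l ∈ Finset.Icc 1 (k - 1), (charN β l : ℚ) * (β l : ℚ)) /
        ((charN β k : ℚ) * (β k : ℚ)) * M = (d : ℚ) := by
      push_cast [hd]
      push_cast at hQ
      linarith [hQ]
    rw [div_mul_eq_mul_div, div_eq_iff hab] at h1
    rw [hSZ]
    push_cast
    linarith [h1]
  have hdvdZ : ((charN β k * β k : ℕ) : ℤ) ∣ SZ * M := by
    refine ⟨d, ?_⟩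
    have : (SZ : ℚ) * M = (((charN β k * β k : ℕ) : ℤ) : ℚ) * d := by push_cast; push_cast at hSM; linarith [hSM]
    exact_mod_cast this
  -- Step 4: n_k * β_k divides β_l * M for l < k
  have hfac : charN β k * β k = charE β (k - 1) * (β k / charE β k) := by
    conv_lhs => rw [show β k = β k / charE β k * charE β k from
      (Nat.div_mul_cancel (charE_dvd β le_rfl)).symm]
    rw [show charN β k * (β k / charE β k * charE β k)
        = charN β k * charE β k * (β k / charE β k) by ring, charN_mul_charE]
  have hdl : ∀ l < k, ((charN β k * β k : ℕ) : ℤ) ∣ (β l : ℤ) * M := by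
    intro l hl
    have : charN β k * β k ∣ β l * M := by
      rw [hfac]
      exact mul_dvd_mul (charE_dvd β (Nat.le_sub_one_of_lt hl)) (Nat.dvd_lcm_left _ _)
    exact_mod_cast this
  have hβkM : ((charN β k * β k : ℕ) : ℤ) ∣ (β k : ℤ) * M := by
    have h1 : ((charN β k * β k : ℕ) : ℤ) ∣ ∑ l ∈ Finset.range k, (β l : ℤ) * M :=
      Finset.dvd_sum fun l hl => hdl l (Finset.mem_range.1 hl)
    have h2 : ((charN β k * β k : ℕ) : ℤ) ∣
        ∑ l ∈ Finset.Icc 1 (k - 1), (charN β l : ℤ) * (β l : ℤ) * M :=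
      Finset.dvd_sum fun l hl => by
        have hlk : l < k := lt_of_le_of_lt (Finset.mem_Icc.1 hl).2 (Nat.sub_lt hk1 one_pos)
        rw [mul_assoc]; exact (hdl l hlk).mul_left _
    have hsplit : (β k : ℤ) * M = SZ * M +
        (∑ l ∈ Finset.Icc 1 (k - 1), (charN β l : ℤ) * (β l : ℤ) * M) -
        ∑ l ∈ Finset.range k, (β l : ℤ) * M := by
      rw [hSZ, Finset.sum_range_succ, ← Finset.sum_mul, ← Finset.sum_mul]
      ring
    rw [hsplit]
    exact dvd_sub (dvd_add hdvdZ h2) h1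
  have hnkM : charN β k ∣ M := by
    have h1 : charN β k * β k ∣ β k * M := by exact_mod_cast hβkM
    rw [mul_comm (β k) M] at h1
    exact (Nat.mul_dvd_mul_iff_right hβk).1 h1
  refine ⟨hnkM, Nat.dvd_antisymm ?_ ?_⟩
  · refine Nat.lcm_dvd (Nat.dvd_lcm_left _ _) (Finset.lcm_dvd fun l hl => ?_)
    rcases eq_or_lt_of_le (Finset.mem_Icc.1 hl).1 with h | h
    · rw [← h]; exact hnkM
    · exact dvd_trans (Finset.dvd_lcm (Finset.mem_Icc.2 ⟨h, (Finset.mem_Icc.1 hl).2⟩))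
        (Nat.dvd_lcm_right _ _)
  · refine Nat.lcm_dvd (Nat.dvd_lcm_left _ _) (dvd_trans ?_ (Nat.dvd_lcm_right _ _))
    exact Finset.lcm_dvd fun l hl => Finset.dvd_lcm
      (Finset.mem_Icc.2 ⟨le_trans (Nat.le_succ k) (Finset.mem_Icc.1 hl).1, (Finset.mem_Icc.1 hl).2⟩)
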